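/- arXiv:2205.13746 — 3 statements merged into one kernel-verified Lean document; each statement's English description precedes it below -/
import Mathlib

section
/- For any positive integer k̃ and any real a with 0 ≤ a ≤ 1, one has k̃^{1-a}·(k̃+1)^a − k̃^a·(k̃+1)^{1-a} ≤ 1. -/
theorem key_power_ineq (k : ℕ) (hk : 0 < k) (a : ℝ) (ha0 : 0 ≤ a) (ha1 : a ≤ 1) :
    (k : ℝ) ^ (1 - a) * ((k : ℝ) + 1) ^ a - (k : ℝ) ^ a * ((k : ℝ) + 1) ^ (1 - a) ≤ 1 := by
  set K : ℝ := (k : ℝ) with hKdef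
  have hK : (0:ℝ) < K := by rw [hKdef]; exact_mod_cast hk
  set r : ℝ := (K + 1) / K with hrdef
  have hr1 : 1 ≤ r := by
    rw [hrdef, le_div_iff₀ hK]; linarith
  have hKr : K * r = K + 1 := by
    rw [hrdef]; field_simp [hK.ne']
  have hr0 : 0 ≤ r := by linarith
  have e : ∀ b : ℝ, K ^ (1 - b) * (K + 1) ^ b = K * r ^ b := by
    intro b
    rw [← hKr, Real.mul_rpow hK.le hr0, ← mul_assoc, ← Real.rpow_add hK, sub_add_cancel,
      Real.rpow_one]
  have e1 := e a
  have e2 : K ^ a * (K + 1) ^ (1 - a) = K * r ^ (1 - a) := by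
    have := e (1 - a)
    rwa [sub_sub_cancel] at this
  rw [e1, e2]
  have h1 : r ^ a ≤ r := by
    calc r ^ a ≤ r ^ (1:ℝ) := Real.rpow_le_rpow_of_exponent_le hr1 ha1
    _ = r := Real.rpow_one r
  have h2 : 1 ≤ r ^ (1 - a) := by
    calc (1:ℝ) = r ^ (0:ℝ) := (Real.rpow_zero r).symm
    _ ≤ r ^ (1 - a) := Real.rpow_le_rpow_of_exponent_le hr1 (by linarith)
  nlinarith [hK.le]
end

section
/- Let C₁ > 0, L > 0, and set η = (C₁ + 2L)/(2C₁ + 2L). Let (τ_t) be defined by τ_{t+1} = η·τ_t with τ_0 > 0, and let (y_t) be a sequence of nonnegative reals satisfying y_0 ≤ C₁·τ_0 and y_{t+1} ≤ (1/2)·y_t + L·(τ_t − τ_{t+1}) for all t. Then y_t ≤ C₁·τ_t for all t ≥ 0. -/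
theorem outer_loop_invariant (C₁ L : ℝ) (hC₁ : 0 < C₁) (hL : 0 < L)
    (τ y : ℕ → ℝ) (hτ0 : 0 < τ 0)
    (hτ : ∀ t, τ (t + 1) = (C₁ + 2 * L) / (2 * C₁ + 2 * L) * τ t)
    (hynn : ∀ t, 0 ≤ y t)
    (hy0 : y 0 ≤ C₁ * τ 0)
    (hrec : ∀ t, y (t + 1) ≤ (1 / 2) * y t + L * (τ t - τ (t + 1))) :
    ∀ t, y t ≤ C₁ * τ t := by
  have hden : (0:ℝ) < 2 * C₁ + 2 * L := by linarith
  have hτpos : ∀ t, 0 < τ t := by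
    intro t
    induction t with
    | zero => exact hτ0
    | succ n ih =>
      rw [hτ n]
      positivity
  intro t
  induction t with
  | zero => exact hy0
  | succ n ih =>
    have h1 := hrec n
    have h2 := hτ n
    have hp := hτpos n
    rw [h2] at h1 ⊢
    set η := (C₁ + 2 * L) / (2 * C₁ + 2 * L) with hη
    have hηm : η * (2 * C₁ + 2 * L) = C₁ + 2 * L :=
      div_mul_cancel₀ _ (ne_of_gt hden)
    nlinarith [mul_le_mul_of_nonneg_right ih (le_of_lt hden), hτpos n,
      mul_pos hp hden]
end

section
/- Let D₁, C₁, D₂, τ₀, α₀ > 0 and h ≥ 1 satisfy τ₀ = (1/(D₁·α₀))·(1 + D₂/C₁). Suppose a nonnegative sequence (y_k) satisfies y_0 ≤ C₁·τ₀/h^{1/3} and y_{k+1} ≤ (1 − D₁·α₀·τ₀/(k+h))·(C₁·τ₀/(k+h)^{1/3}) + D₂·τ₀/(k+h)^{4/3} whenever y_k ≤ C₁·τ₀/(k+h)^{1/3}. Then y_k ≤ C₁·τ₀/(k+h)^{1/3} for all k ≥ 0. -/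
lemma rate_key (x : ℝ) (hx : 1 ≤ x) :
    (x - 1) / x ^ ((4 : ℝ) / 3) ≤ 1 / (x + 1) ^ ((1 : ℝ) / 3) := by
  have hx0 : (0 : ℝ) < x := lt_of_lt_of_le one_pos hx
  have hx1 : (0 : ℝ) < x + 1 := by linarith
  have hxm : (0 : ℝ) ≤ x - 1 := by linarith
  have hp1 : (0 : ℝ) < x ^ ((4 : ℝ) / 3) := Real.rpow_pos_of_pos hx0 _
  have hp2 : (0 : ℝ) < (x + 1) ^ ((1 : ℝ) / 3) := Real.rpow_pos_of_pos hx1 _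
  rw [div_le_div_iff₀ hp1 hp2, one_mul]
  have h1 : (x - 1) = ((x - 1) ^ (3 : ℕ)) ^ ((1 : ℝ) / 3) := by
    rw [← Real.rpow_natCast (x - 1) 3, ← Real.rpow_mul hxm]
    norm_num
  have h2 : x ^ ((4 : ℝ) / 3) = (x ^ (4 : ℕ)) ^ ((1 : ℝ) / 3) := by
    rw [← Real.rpow_natCast x 4, ← Real.rpow_mul hx0.le]
    norm_num
  rw [h1, h2, ← Real.mul_rpow (by positivity) hx1.le]
  apply Real.rpow_le_rpow (by positivity) _ (by norm_num)
  nlinarith [sq_nonneg x, sq_nonneg (x - 1), sq_nonneg (x + 1)]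

theorem rate_induction (D₁ C₁ D₂ τ₀ α₀ h : ℝ)
    (hD₁ : 0 < D₁) (hC₁ : 0 < C₁) (hD₂ : 0 < D₂) (hτ₀ : 0 < τ₀) (hα₀ : 0 < α₀)
    (hh : 1 ≤ h)
    (hτeq : τ₀ = (1 / (D₁ * α₀)) * (1 + D₂ / C₁))
    (y : ℕ → ℝ) (hynn : ∀ k, 0 ≤ y k)
    (hy0 : y 0 ≤ C₁ * τ₀ / h ^ ((1 : ℝ) / 3))
    (hstep : ∀ k : ℕ, y k ≤ C₁ * τ₀ / ((k : ℝ) + h) ^ ((1 : ℝ) / 3) →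
      y (k + 1) ≤ (1 - D₁ * α₀ * τ₀ / ((k : ℝ) + h)) *
          (C₁ * τ₀ / ((k : ℝ) + h) ^ ((1 : ℝ) / 3)) +
        D₂ * τ₀ / ((k : ℝ) + h) ^ ((4 : ℝ) / 3)) :
    ∀ k : ℕ, y k ≤ C₁ * τ₀ / ((k : ℝ) + h) ^ ((1 : ℝ) / 3) := by
  have hDα : D₁ * α₀ * τ₀ = 1 + D₂ / C₁ := by
    rw [hτeq]; field_simp
  intro k
  induction k with
  | zero => simpa using hy0
  | succ k ih =>
    have hx : (1 : ℝ) ≤ (k : ℝ) + h := by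
      have : (0 : ℝ) ≤ (k : ℝ) := Nat.cast_nonneg k
      linarith
    set x : ℝ := (k : ℝ) + h with hxdef
    have hx0 : (0 : ℝ) < x := lt_of_lt_of_le one_pos hx
    have hp3 : (0 : ℝ) < x ^ ((1 : ℝ) / 3) := Real.rpow_pos_of_pos hx0 _
    have hp4 : (0 : ℝ) < x ^ ((4 : ℝ) / 3) := Real.rpow_pos_of_pos hx0 _
    have hsplit : x ^ ((4 : ℝ) / 3) = x * x ^ ((1 : ℝ) / 3) := by
      rw [← Real.rpow_one_add' hx0.le (by norm_num : (1 : ℝ) + 1/3 ≠ 0)]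
      norm_num
    have hstep' := hstep k ih
    have heq : (1 - D₁ * α₀ * τ₀ / x) * (C₁ * τ₀ / x ^ ((1 : ℝ) / 3)) +
        D₂ * τ₀ / x ^ ((4 : ℝ) / 3) = C₁ * τ₀ * ((x - 1) / x ^ ((4 : ℝ) / 3)) := by
      rw [hDα, hsplit]
      field_simp
      ring
    have hkey := rate_key x hx
    have hfin : C₁ * τ₀ * ((x - 1) / x ^ ((4 : ℝ) / 3)) ≤
        C₁ * τ₀ * (1 / (x + 1) ^ ((1 : ℝ) / 3)) :=
      mul_le_mul_of_nonneg_left hkey (by positivity)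
    have hcast : ((k + 1 : ℕ) : ℝ) + h = x + 1 := by
      push_cast; rw [hxdef]; ring
    rw [hcast]
    calc y (k + 1) ≤ _ := hstep'
      _ = C₁ * τ₀ * ((x - 1) / x ^ ((4 : ℝ) / 3)) := heq
      _ ≤ C₁ * τ₀ * (1 / (x + 1) ^ ((1 : ℝ) / 3)) := hfin
      _ = C₁ * τ₀ / (x + 1) ^ ((1 : ℝ) / 3) := by ring
end
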